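/- Let X be a Banach space, 2 ≤ p ≤ ∞, with dual exponent p′ (1/p + 1/p′ = 1). Suppose l_p is finitely representable in X, and let (a_n) be positive reals with Σ_{n=1}^∞ a_n^{-p′} = ∞. Then there exists a sequence (x_n) in X with ‖x_n‖ = a_n having 0 as a weak cluster point; moreover there is a weight matrix P such that (x_n) is weakly (P,p′)-convergent to 0. -/

import Mathlib

open Filter Topology

/-- `x₀` is a weak cluster point of the sequence `x`. -/
def IsWeakClusterPt {X : Type*} [NormedAddCommGroup X] [NormedSpace ℝ X]
    (x₀ : X) (x : ℕ → X) : Prop :=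
  ∀ (k : ℕ) (f : Fin k → X →L[ℝ] ℝ) (ε : ℝ), 0 < ε → ∀ N : ℕ,
    ∃ n ≥ N, ∀ i, |f i (x n) - f i x₀| < ε

/-- `ℓ_p` is finitely representable in `X`: for every `ε > 0` and `n` there are unit
vectors `e 0, …, e (n-1)` in `X` which are `(1 ± ε)`-equivalent to the `ℓ_p^n` basis.
(The `ℓ_p^n` norm of a coefficient vector `b` is expressed via `PiLp p`.) -/
def LpFinitelyRepresentable (p : ENNReal) (X : Type*) [NormedAddCommGroup X]
    [NormedSpace ℝ X] : Prop :=
  ∀ ε : ℝ, 0 < ε → ∀ n : ℕ, ∃ e : Fin n → X, (∀ j, ‖e j‖ = 1) ∧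
    ∀ b : Fin n → ℝ,
      (1 - ε) * ‖(WithLp.equiv p (Fin n → ℝ)).symm b‖ ≤ ‖∑ j, b j • e j‖ ∧
      ‖∑ j, b j • e j‖ ≤ (1 + ε) * ‖(WithLp.equiv p (Fin n → ℝ)).symm b‖


lemma real_sign_mul_self (x : ℝ) : Real.sign x * x = |x| := by
  rcases lt_trichotomy x 0 with h | h | h
  · rw [Real.sign_of_neg h, abs_of_neg h]; ring
  · simp [h]
  · rw [Real.sign_of_pos h, abs_of_pos h]; ring

lemma abs_real_sign_le (x : ℝ) : |Real.sign x| ≤ 1 := by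
  rcases Real.sign_apply_eq x with h | h | h <;> simp [h]

lemma dual_est {X : Type*} [NormedAddCommGroup X] [NormedSpace ℝ X]
    (p : ENNReal) (hp : 2 ≤ p) (p' : ℝ) (hp'1 : 1 ≤ p')
    (hconj : 1 / p.toReal + 1 / p' = 1) {L : ℕ} (e : Fin L → X)
    (hub : ∀ b : Fin L → ℝ, ‖∑ j, b j • e j‖ ≤ 2 * ‖(WithLp.equiv p (Fin L → ℝ)).symm b‖)
    (f : X →L[ℝ] ℝ) :
    ∑ j, |f (e j)| ^ p' ≤ (2 * ‖f‖) ^ p' := by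
  have hp'pos : (0:ℝ) < p' := lt_of_lt_of_le one_pos hp'1
  rcases eq_or_ne p (⊤ : ENNReal) with hptop | hptop
  · -- p = ⊤, p' = 1
    subst hptop
    have hp'eq : p' = 1 := by
      rw [ENNReal.toReal_top] at hconj
      simp only [div_zero, zero_add] at hconj
      field_simp at hconj; linarith
    subst hp'eq
    set b : Fin L → ℝ := fun j => Real.sign (f (e j)) with hb
    have hbnorm : ‖(WithLp.equiv ⊤ (Fin L → ℝ)).symm b‖ ≤ 1 := by
      rw [PiLp.norm_eq_ciSup]
      refine Real.iSup_le (fun i => ?_) zero_le_one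
      simpa [hb] using abs_real_sign_le (f (e i))
    have hsum : ∑ j, b j * f (e j) = ∑ j, |f (e j)| :=
      Finset.sum_congr rfl fun j _ => real_sign_mul_self _
    have h1 : ∑ j, |f (e j)| ≤ 2 * ‖f‖ := by
      calc ∑ j, |f (e j)| = f (∑ j, b j • e j) := by
            rw [map_sum]; rw [← hsum]
            exact Finset.sum_congr rfl fun j _ => by rw [f.map_smul]; rfl
        _ ≤ ‖f‖ * ‖∑ j, b j • e j‖ := le_trans (le_abs_self _) (f.le_opNorm _)
        _ ≤ ‖f‖ * (2 * 1) := by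
            refine mul_le_mul_of_nonneg_left ?_ (norm_nonneg f)
            exact le_trans (hub b) (by nlinarith [norm_nonneg ((WithLp.equiv ⊤ (Fin L → ℝ)).symm b), hbnorm])
        _ = 2 * ‖f‖ := by ring
    simpa using h1
  · -- p finite, q := p.toReal ≥ 2
    set q := p.toReal with hq
    have hq2 : (2:ℝ) ≤ q := by
      have := (ENNReal.toReal_le_toReal (by norm_num) hptop).mpr hp
      simpa using this
    have hq0 : (0:ℝ) < q := by linarith
    have hp'gt : 1 < p' := by
      have h1 : 1 / p' < 1 := by
        have : 0 < 1 / q := by positivity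
        linarith
      have := (div_lt_one hp'pos).mp h1
      linarith
    have hp'ne : p' ≠ 0 := ne_of_gt hp'pos
    have hkey : (p' - 1) * q = p' := by
      field_simp at hconj
      nlinarith [hconj]
    set b : Fin L → ℝ := fun j => Real.sign (f (e j)) * |f (e j)| ^ (p' - 1) with hb
    have habs : ∀ j, |b j| = |f (e j)| ^ (p' - 1) := by
      intro j
      rcases eq_or_ne (f (e j)) 0 with h | h
      · simp [hb, h, Real.zero_rpow (by intro hc; exact absurd hc (by intro hc'; nlinarith) : p' - 1 ≠ 0)]
      · rw [hb]
        simp only []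
        rw [abs_mul, abs_of_nonneg (Real.rpow_nonneg (abs_nonneg _) _)]
        rcases Real.sign_apply_eq_of_ne_zero _ h with hs | hs <;> rw [hs] <;> simp
    have hbx : ∀ j, b j * f (e j) = |f (e j)| ^ p' := by
      intro j
      rcases eq_or_ne (f (e j)) 0 with h | h
      · simp [hb, h, Real.zero_rpow hp'ne]
      · have hpos : 0 < |f (e j)| := abs_pos.mpr h
        calc b j * f (e j) = |f (e j)| ^ (p' - 1) * (Real.sign (f (e j)) * f (e j)) := by
              rw [hb]; ring
          _ = |f (e j)| ^ (p' - 1) * |f (e j)| ^ (1:ℝ) := by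
              rw [real_sign_mul_self, Real.rpow_one]
          _ = |f (e j)| ^ p' := by rw [← Real.rpow_add hpos]; ring_nf
    set A := ∑ j, |f (e j)| ^ p' with hA
    have hA0 : 0 ≤ A := Finset.sum_nonneg fun j _ => Real.rpow_nonneg (abs_nonneg _) _
    have hbnorm : ‖(WithLp.equiv p (Fin L → ℝ)).symm b‖ = A ^ (1 / q) := by
      rw [PiLp.norm_eq_sum hq0]
      congr 1
      refine Finset.sum_congr rfl fun j _ => ?_
      rw [WithLp.equiv_symm_apply, PiLp.toLp_apply, Real.norm_eq_abs, habs j,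
        ← Real.rpow_mul (abs_nonneg _), ← hq, hkey]
    have hAle : A ≤ 2 * ‖f‖ * A ^ (1 / q) := by
      calc A = f (∑ j, b j • e j) := by
            rw [map_sum, hA]
            exact (Finset.sum_congr rfl fun j _ => by rw [f.map_smul, smul_eq_mul, ← hbx j]).symm
        _ ≤ ‖f‖ * ‖∑ j, b j • e j‖ := le_trans (le_abs_self _) (f.le_opNorm _)
        _ ≤ ‖f‖ * (2 * A ^ (1 / q)) := by
            refine mul_le_mul_of_nonneg_left ?_ (norm_nonneg f)
            rw [← hbnorm]; exact hub b
        _ = 2 * ‖f‖ * A ^ (1 / q) := by ring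
    rcases eq_or_lt_of_le hA0 with hA0' | hA0'
    · rw [← hA0']; positivity
    · have h1 : A ^ (1 / p') ≤ 2 * ‖f‖ := by
        have hconj' : 1 / p' = 1 - 1 / q := by linarith
        rw [hconj', Real.rpow_sub hA0', Real.rpow_one]
        rw [div_le_iff₀ (Real.rpow_pos_of_pos hA0' _)]
        exact hAle
      calc A = (A ^ (1 / p')) ^ p' := by
            rw [← Real.rpow_mul hA0, one_div_mul_cancel hp'ne, Real.rpow_one]
        _ ≤ (2 * ‖f‖) ^ p' := Real.rpow_le_rpow (Real.rpow_nonneg hA0 _) h1 hp'pos.le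

theorem stmt9 {X : Type*} [NormedAddCommGroup X] [NormedSpace ℝ X] [CompleteSpace X]
    (p : ENNReal) (hp : 2 ≤ p) (p' : ℝ) (hp'1 : 1 ≤ p') (hp'2 : p' ≤ 2)
    (hconj : 1 / p.toReal + 1 / p' = 1)
    (hfr : LpFinitelyRepresentable p X)
    (a : ℕ → ℝ) (ha : ∀ n, 0 < a n)
    (hdiv : ¬ Summable (fun n => a n ^ (-p'))) :
    ∃ x : ℕ → X, (∀ n, ‖x n‖ = a n) ∧ IsWeakClusterPt 0 x ∧
      ∃ P : ℕ → ℕ → ℝ, (∀ n m, 0 ≤ P n m) ∧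
        (∀ n, (Function.support (P n)).Finite) ∧
        (∀ n, ∑' m, P n m = 1) ∧
        (∀ m, Tendsto (fun n => P n m) atTop (𝓝 0)) ∧
        ∀ f : X →L[ℝ] ℝ,
          Tendsto (fun n => ∑' m, P n m * |f (x m)| ^ p') atTop (𝓝 0) := by
  classical
  have hp'pos : (0:ℝ) < p' := lt_of_lt_of_le one_pos hp'1
  have hterm : ∀ n, 0 < a n ^ (-p') := fun n => Real.rpow_pos_of_pos (ha n) _
  have hT : Tendsto (fun M => ∑ m ∈ Finset.range M, a m ^ (-p')) atTop atTop :=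
    (not_summable_iff_tendsto_nat_atTop_of_nonneg fun n => (hterm n).le).mp hdiv
  have hstep : ∀ s k : ℕ, ∃ M, s < M ∧ (k : ℝ) + 1 ≤ ∑ m ∈ Finset.Ico s M, a m ^ (-p') := by
    intro s k
    obtain ⟨M, hM1, hM2⟩ :=
      ((hT.eventually_ge_atTop ((∑ m ∈ Finset.range s, a m ^ (-p')) + ((k:ℝ) + 1))).and
        (eventually_gt_atTop s)).exists
    refine ⟨M, hM2, ?_⟩
    rw [Finset.sum_Ico_eq_sub _ hM2.le]
    linarith
  -- the block endpoints
  let N : ℕ → ℕ := fun k => Nat.rec (motive := fun _ => ℕ) 0 (fun k' ih => (hstep ih k').choose) k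
  have hNlt : ∀ k, N k < N (k + 1) := fun k => (hstep (N k) k).choose_spec.1
  have hS : ∀ k : ℕ, (k : ℝ) + 1 ≤ ∑ m ∈ Finset.Ico (N k) (N (k + 1)), a m ^ (-p') :=
    fun k => (hstep (N k) k).choose_spec.2
  have hNmono : StrictMono N := strictMono_nat_of_lt_succ hNlt
  have hNk : ∀ k, k ≤ N k := fun k => hNmono.le_apply
  -- block index
  haveI : ∀ m : ℕ, DecidablePred fun k => N k ≤ m := fun m k => Nat.decLe _ _
  let blk : ℕ → ℕ := fun m => Nat.findGreatest (fun k => N k ≤ m) m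
  have hblk1 : ∀ m, N (blk m) ≤ m := fun m =>
    Nat.findGreatest_spec (P := fun k => N k ≤ m) (Nat.zero_le m) (Nat.zero_le m)
  have hblk2 : ∀ m, m < N (blk m + 1) := by
    intro m
    by_contra h
    push_neg at h
    exact Nat.findGreatest_is_greatest (lt_add_one _) (le_trans (hNk _) h) h
  have hblk_eq : ∀ n m, N n ≤ m → m < N (n + 1) → blk m = n := by
    intro n m h1 h2
    have hle : n ≤ blk m := Nat.le_findGreatest (le_trans (hNk n) h1) h1
    have hlt : blk m < n + 1 := by
      by_contra h
      push_neg at h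
      exact absurd (le_trans (hNmono.monotone h) (hblk1 m)) (not_le.mpr h2)
    omega
  -- the finite ℓ_p systems
  choose E hE1 hE2 using fun n => hfr 1 one_pos (N (n + 1) - N n)
  have hub : ∀ n (b : Fin (N (n + 1) - N n) → ℝ),
      ‖∑ j, b j • E n j‖ ≤ 2 * ‖(WithLp.equiv p (Fin (N (n + 1) - N n) → ℝ)).symm b‖ := by
    intro n b
    have := (hE2 n b).2
    calc ‖∑ j, b j • E n j‖ ≤ (1 + 1) * ‖(WithLp.equiv p _).symm b‖ := this
      _ = 2 * ‖(WithLp.equiv p _).symm b‖ := by norm_num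
  have hdual : ∀ (g : X →L[ℝ] ℝ) n, ∑ j, |g (E n j)| ^ p' ≤ (2 * ‖g‖) ^ p' :=
    fun g n => dual_est p hp p' hp'1 hconj (E n) (hub n) g
  have hxlt : ∀ m, m - N (blk m) < N (blk m + 1) - N (blk m) := by
    intro m
    have h1 := hblk1 m
    have h2 := hblk2 m
    omega
  set x : ℕ → X := fun m => a m • E (blk m) ⟨m - N (blk m), hxlt m⟩ with hxdef
  have hxnorm : ∀ m, ‖x m‖ = a m := by
    intro m
    rw [hxdef]
    simp only [norm_smul, Real.norm_eq_abs, hE1, mul_one, abs_of_pos (ha m)]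
  have hxm : ∀ n m (h1 : N n ≤ m) (h2 : m < N (n + 1)),
      x m = a m • E n ⟨m - N n, by omega⟩ := by
    intro n m h1 h2
    have hb := hblk_eq n m h1 h2
    subst hb
    rfl
  -- the weights
  set S : ℕ → ℝ := fun n => ∑ m ∈ Finset.Ico (N n) (N (n + 1)), a m ^ (-p') with hSdef
  have hSpos : ∀ n, 0 < S n := fun n => lt_of_lt_of_le (by positivity) (hS n)
  set P : ℕ → ℕ → ℝ :=
    fun n m => if m ∈ Finset.Ico (N n) (N (n + 1)) then a m ^ (-p') / S n else 0 with hPdef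
  have hPnonneg : ∀ n m, 0 ≤ P n m := by
    intro n m
    simp only [hPdef]
    split
    · exact le_of_lt (div_pos (hterm m) (hSpos n))
    · exact le_rfl
  have hPzero : ∀ n m, m ∉ Finset.Ico (N n) (N (n + 1)) → P n m = 0 :=
    fun n m hm => if_neg hm
  -- core computation
  have hcore : ∀ (g : X →L[ℝ] ℝ) n,
      ∑ m ∈ Finset.Ico (N n) (N (n + 1)), a m ^ (-p') * |g (x m)| ^ p'
        = ∑ j, |g (E n j)| ^ p' := by
    intro g n
    refine Finset.sum_bij'
      (i := fun m hm => (⟨m - N n, by rw [Finset.mem_Ico] at hm; omega⟩ : Fin (N (n + 1) - N n)))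
      (j := fun j _ => N n + (j : ℕ)) (fun m hm => Finset.mem_univ _) ?_ ?_ ?_ ?_
    · intro j _
      rw [Finset.mem_Ico]
      have := j.isLt
      omega
    · intro m hm
      rw [Finset.mem_Ico] at hm
      dsimp only
      omega
    · intro j _
      ext
      dsimp only
      have := j.isLt
      omega
    · intro m hm
      rw [Finset.mem_Ico] at hm
      rw [hxm n m hm.1 hm.2]
      have hg : |g (a m • E n ⟨m - N n, by omega⟩)| = a m * |g (E n ⟨m - N n, by omega⟩)| := by
        rw [g.map_smul, smul_eq_mul, abs_mul, abs_of_pos (ha m)]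
      rw [hg, Real.mul_rpow (ha m).le (abs_nonneg _), ← mul_assoc,
        Real.rpow_neg (ha m).le, inv_mul_cancel₀ (ne_of_gt (Real.rpow_pos_of_pos (ha m) _)),
        one_mul]
  have hkey : ∀ (g : X →L[ℝ] ℝ) n,
      ∑' m, P n m * |g (x m)| ^ p' = (∑ j, |g (E n j)| ^ p') / S n := by
    intro g n
    rw [tsum_eq_sum (s := Finset.Ico (N n) (N (n + 1)))
      (fun m hm => by rw [hPzero n m hm, zero_mul]), ← hcore g n, Finset.sum_div]
    refine Finset.sum_congr rfl fun m hm => ?_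
    simp only [hPdef, if_pos hm]
    ring
  -- finish
  refine ⟨x, hxnorm, ?_, P, hPnonneg, ?_, ?_, ?_, ?_⟩
  · -- weak cluster point
    intro k f ε hε N₀
    set C : ℝ := ∑ i, (2 * ‖f i‖) ^ p' with hCdef
    have hC0 : 0 ≤ C := Finset.sum_nonneg fun i _ => Real.rpow_nonneg (by positivity) _
    have hεp : 0 < ε ^ p' := Real.rpow_pos_of_pos hε _
    set n : ℕ := max N₀ ⌈C / ε ^ p'⌉₊ with hndef
    have hn1 : N₀ ≤ n := le_max_left _ _
    have hn2 : C / ε ^ p' ≤ (n : ℝ) := by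
      refine le_trans (Nat.le_ceil _) ?_
      exact_mod_cast le_max_right N₀ _
    have hCS : C < S n * ε ^ p' := by
      have h1 : (n : ℝ) + 1 ≤ S n := hS n
      have : C / ε ^ p' < S n := by linarith
      calc C = (C / ε ^ p') * ε ^ p' := by field_simp
        _ < S n * ε ^ p' := by exact mul_lt_mul_of_pos_right this hεp
    -- find a good m in block n
    have hex : ∃ m ∈ Finset.Ico (N n) (N (n + 1)), (∑ i, |f i (x m)| ^ p') < ε ^ p' := by
      by_contra hcon
      push_neg at hcon
      have hlow : S n * ε ^ p' ≤
          ∑ m ∈ Finset.Ico (N n) (N (n + 1)), a m ^ (-p') * ∑ i, |f i (x m)| ^ p' := by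
        rw [hSdef, Finset.sum_mul]
        refine Finset.sum_le_sum fun m hm => ?_
        exact mul_le_mul_of_nonneg_left (hcon m hm) (hterm m).le
      have hup : ∑ m ∈ Finset.Ico (N n) (N (n + 1)), a m ^ (-p') * ∑ i, |f i (x m)| ^ p' ≤ C := by
        calc ∑ m ∈ Finset.Ico (N n) (N (n + 1)), a m ^ (-p') * ∑ i, |f i (x m)| ^ p'
            = ∑ i, ∑ m ∈ Finset.Ico (N n) (N (n + 1)), a m ^ (-p') * |f i (x m)| ^ p' := by
              rw [Finset.sum_comm]
              exact Finset.sum_congr rfl fun m _ => Finset.mul_sum _ _ _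
          _ = ∑ i, ∑ j, |f i (E n j)| ^ p' :=
              Finset.sum_congr rfl fun i _ => hcore (f i) n
          _ ≤ C := Finset.sum_le_sum fun i _ => hdual (f i) n
      linarith
    obtain ⟨m, hm, hsum⟩ := hex
    rw [Finset.mem_Ico] at hm
    refine ⟨m, le_trans hn1 (le_trans (hNk n) hm.1), fun i => ?_⟩
    have h1 : |f i (x m)| ^ p' < ε ^ p' := by
      refine lt_of_le_of_lt ?_ hsum
      exact Finset.single_le_sum (f := fun i => |f i (x m)| ^ p')
        (fun i _ => Real.rpow_nonneg (abs_nonneg _) _) (Finset.mem_univ i)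
    have h2 : |f i (x m)| < ε := by
      by_contra hcon
      push_neg at hcon
      exact absurd (Real.rpow_le_rpow hε.le hcon hp'pos.le) (not_le.mpr h1)
    simpa using h2
  · -- finite support
    intro n
    refine Set.Finite.subset (Finset.Ico (N n) (N (n + 1))).finite_toSet fun m hm => ?_
    rw [Function.mem_support] at hm
    by_contra hmem
    exact hm (hPzero n m (by simpa using hmem))
  · -- row sums
    intro n
    rw [tsum_eq_sum (s := Finset.Ico (N n) (N (n + 1))) (fun m hm => hPzero n m hm)]
    have : ∑ m ∈ Finset.Ico (N n) (N (n + 1)), P n m = S n / S n := by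
      rw [hSdef, Finset.sum_div]
      exact Finset.sum_congr rfl fun m hm => by simp only [hPdef, if_pos hm, hSdef]
    rw [this, div_self (ne_of_gt (hSpos n))]
  · -- columns tend to 0
    intro m
    refine tendsto_atTop_of_eventually_const (i₀ := m + 1) fun n hn => ?_
    refine hPzero n m ?_
    rw [Finset.mem_Ico]
    intro hcon
    have := le_trans (le_trans hn (hNk n)) hcon.1
    omega
  · -- the weak (P, p') convergence
    intro f
    refine squeeze_zero (f := fun n => ∑' m, P n m * |f (x m)| ^ p')
      (g := fun n => (2 * ‖f‖) ^ p' / ((n : ℝ) + 1)) (fun n => ?_) (fun n => ?_) ?_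
    · rw [hkey f n]
      have h1 : 0 ≤ ∑ j, |f (E n j)| ^ p' :=
        Finset.sum_nonneg fun j _ => Real.rpow_nonneg (abs_nonneg _) _
      exact div_nonneg h1 (hSpos n).le
    · show ∑' m, P n m * |f (x m)| ^ p' ≤ (2 * ‖f‖) ^ p' / ((n : ℝ) + 1)
      rw [hkey f n]
      exact div_le_div₀ (Real.rpow_nonneg (by positivity) _) (hdual f n)
        (by positivity) (hS n)
    · have h := (tendsto_const_div_atTop_nhds_zero_nat ((2 * ‖f‖) ^ p')).comp
        (tendsto_add_atTop_nat 1)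
      refine h.congr fun n => ?_
      simp only [Function.comp]
      norm_cast
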